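/- For every x ≥ 1, ∂τ/∂t(x, (x+1)²/(2x+3)) > 0, where τ(x,t) = (1/x)(t - (t+x+1)(t/(1+t))^{x+1}). -/

import Mathlib

open Real

noncomputable def tau (x t : ℝ) : ℝ := (1/x) * (t - (t + x + 1) * (t/(1+t)) ^ (x+1))

lemma exp_pade {v : ℝ} (hv : 0 ≤ v) : Real.exp v * (2 - v) ≤ 2 + v := by
  have key : ∀ w : ℝ, Real.exp w * (1 - w) ≤ 1 := by
    intro w
    have h1 : 1 - w ≤ Real.exp (-w) := by
      have := Real.add_one_le_exp (-w); linarith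
    calc Real.exp w * (1 - w) ≤ Real.exp w * Real.exp (-w) :=
          mul_le_mul_of_nonneg_left h1 (Real.exp_pos w).le
      _ = 1 := by rw [← Real.exp_add]; simp
  set F : ℝ → ℝ := fun v => 2 + v - Real.exp v * (2 - v) with hF
  have hder : ∀ w : ℝ, HasDerivAt F (1 - Real.exp w * (1 - w)) w := by
    intro w
    have h1 : HasDerivAt (fun v : ℝ => Real.exp v * (2 - v))
        (Real.exp w * (2 - w) + Real.exp w * (0 - 1)) w :=
      (Real.hasDerivAt_exp w).mul ((hasDerivAt_const w 2).sub (hasDerivAt_id w))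
    have h2 : HasDerivAt (fun v : ℝ => 2 + v) (0 + 1) w :=
      (hasDerivAt_const w 2).add (hasDerivAt_id w)
    have h3 := h2.sub h1
    refine h3.congr_deriv ?_
    ring
  have hmono : Monotone F := by
    apply monotone_of_deriv_nonneg
    · intro w; exact (hder w).differentiableAt
    · intro w; rw [(hder w).deriv]; linarith [key w]
  have h0 : F 0 = 0 := by simp [hF]
  have h := hmono hv
  rw [h0] at h
  simp only [hF] at h
  linarith

lemma log_lb {u : ℝ} (hu : 0 < u) : 2*u/(2+u) ≤ Real.log (1+u) := by
  set v := 2*u/(2+u) with hv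
  have h2u : 0 < 2 + u := by linarith
  have hv0 : 0 ≤ v := by positivity
  have hv2 : v < 2 := by
    rw [hv, div_lt_iff₀ h2u]; linarith
  have h2v : 0 < 2 - v := by linarith
  have hp := exp_pade hv0
  have hid : (1+u)*(2-v) = 2+v := by
    rw [hv]; field_simp; ring
  have h1u : Real.exp v ≤ 1 + u := by
    have := hp.trans_eq hid.symm
    exact le_of_mul_le_mul_right this h2v
  exact (Real.le_log_iff_exp_le (by linarith)).mpr h1u

lemma exp2_lb : (7.389056 : ℝ) ≤ Real.exp 2 := by
  have h := Real.exp_one_gt_d9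
  have h2 : Real.exp 2 = Real.exp 1 * Real.exp 1 := by
    rw [← Real.exp_add]; norm_num
  nlinarith [Real.exp_pos 1]

lemma poly_ineq {x : ℝ} (hx : 1 ≤ x) :
    7*x^2+21*x+16 < (7.389056:ℝ)*((x+1)*(x+2)) := by
  nlinarith [sq_nonneg (x-1)]

theorem stmt9 : ∀ x : ℝ, 1 ≤ x →
    0 < deriv (fun t => tau x t) ((x+1)^2/(2*x+3)) := by
  intro x hx
  have hx0 : 0 < x := by linarith
  have h23 : (0:ℝ) < 2*x+3 := by linarith
  have hx1 : (0:ℝ) < x+1 := by linarith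
  have hx2 : (0:ℝ) < x+2 := by linarith
  set t₀ : ℝ := (x+1)^2/(2*x+3) with ht₀
  have ht0 : 0 < t₀ := by positivity
  have h1t : 1 + t₀ = (x+2)^2/(2*x+3) := by
    rw [ht₀]; field_simp; ring
  have h1t0 : 0 < 1 + t₀ := by rw [h1t]; positivity
  set a : ℝ := (x+1)/(x+2) with ha
  set b : ℝ := (x+2)/(x+1) with hb
  have ha0 : 0 < a := by positivity
  have hb0 : 0 < b := by positivity
  have hab : a * b = 1 := by rw [ha, hb]; field_simp
  have hu : t₀/(1+t₀) = a^2 := by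
    rw [h1t, ht₀, ha]
    field_simp
  -- derivative computation
  have hg : HasDerivAt (fun t : ℝ => t/(1+t)) ((1*(1+t₀) - t₀*1)/(1+t₀)^2) t₀ :=
    (hasDerivAt_id t₀).div ((hasDerivAt_id t₀).const_add 1) (ne_of_gt h1t0)
  have hpow : HasDerivAt (fun t : ℝ => (t/(1+t)) ^ (x+1))
      ((1*(1+t₀) - t₀*1)/(1+t₀)^2 * (x+1) * (t₀/(1+t₀)) ^ (x+1-1)) t₀ :=
    hg.rpow_const (p := x+1) (Or.inr (by linarith))
  have hlin : HasDerivAt (fun t : ℝ => t + x + 1) 1 t₀ := by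
    simpa using ((hasDerivAt_id t₀).add_const x).add_const 1
  have hmul := hlin.mul hpow
  have hsub := (hasDerivAt_id t₀).sub hmul
  have hfull := hsub.const_mul (1/x)
  have hderiv : deriv (fun t => tau x t) t₀ =
      (1/x) * (1 - (1 * (t₀/(1+t₀))^(x+1) + (t₀+x+1) *
        ((1*(1+t₀)-t₀*1)/(1+t₀)^2 * (x+1) * (t₀/(1+t₀))^(x+1-1)))) := by
    unfold tau
    exact hfull.deriv
  -- simplify the exponent and the base
  have hx11 : x + 1 - 1 = x := by ring
  rw [hx11, hu] at hderiv
  -- rpow algebra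
  have e2 : ((a^2 : ℝ)) ^ x = a ^ (2*x) := by
    rw [← Real.rpow_natCast a 2, ← Real.rpow_mul ha0.le]
    norm_num
  have e1 : ((a^2 : ℝ)) ^ (x+1) = a ^ (2*x) * a^2 := by
    rw [← Real.rpow_natCast a 2, ← Real.rpow_mul ha0.le,
      show ((2:ℕ):ℝ)*(x+1) = 2*x + 2 by push_cast; ring,
      Real.rpow_add ha0, Real.rpow_two]
    norm_num
  rw [e1, e2] at hderiv
  have h3 : t₀ + x + 1 = (x+1)*(3*x+4)/(2*x+3) := by
    rw [ht₀]; field_simp; ring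
  set E : ℝ := (x+1)^2*(7*x^2+21*x+16)/(x+2)^4 with hE
  set A : ℝ := a ^ (2*x) with hA
  have hD : 1 * (A * a^2) + (t₀+x+1) *
      ((1*(1+t₀)-t₀*1)/(1+t₀)^2 * (x+1) * A) = A * E := by
    rw [h3, h1t, ht₀, hE, ha]
    field_simp [h23.ne', hx2.ne', hx1.ne']
    ring
  rw [hD] at hderiv
  -- key inequality: E < b ^ (2*x)
  have hlogb : 2/(2*x+3) ≤ Real.log b := by
    have h := log_lb (u := 1/(x+1)) (by positivity)
    have e3 : 1 + 1/(x+1) = b := by rw [hb]; field_simp; ring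
    have e4 : 2*(1/(x+1))/(2+1/(x+1)) = 2/(2*x+3) := by
      rw [div_eq_div_iff (by positivity) h23.ne']
      field_simp
      ring
    rw [e3, e4] at h
    exact h
  have hQ : Real.exp 2 * a ≤ b ^ (2*x+2) := by
    rw [Real.rpow_def_of_pos hb0]
    have h1 : 2 - 2/(2*x+3) ≤ Real.log b * (2*x+2) := by
      calc 2 - 2/(2*x+3) = (2/(2*x+3)) * (2*x+2) := by field_simp; ring
        _ ≤ Real.log b * (2*x+2) := by
            apply mul_le_mul_of_nonneg_right hlogb (by linarith)
    have h2 := Real.exp_le_exp.mpr h1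
    refine le_trans ?_ h2
    rw [Real.exp_sub]
    have hs0 : (0:ℝ) ≤ 2/(2*x+3) := by positivity
    have hps := exp_pade hs0
    have hes : Real.exp (2/(2*x+3)) ≤ b := by
      have h2s : (0:ℝ) < 2 - 2/(2*x+3) := by
        rw [sub_pos, div_lt_iff₀ h23]; linarith
      have hid : b * (2 - 2/(2*x+3)) = 2 + 2/(2*x+3) := by
        rw [hb]; field_simp; ring
      exact le_of_mul_le_mul_right (hps.trans_eq hid.symm) h2s
    rw [le_div_iff₀ (Real.exp_pos _)]
    calc Real.exp 2 * a * Real.exp (2/(2*x+3)) ≤ Real.exp 2 * a * b := by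
          apply mul_le_mul_of_nonneg_left hes (by positivity)
      _ = Real.exp 2 := by rw [mul_assoc, hab, mul_one]
  have hexp2 := exp2_lb
  have hkey : 7*x^2+21*x+16 < Real.exp 2 * ((x+1)*(x+2)) := by
    have hprod : (7.389056:ℝ)*((x+1)*(x+2)) ≤ Real.exp 2 * ((x+1)*(x+2)) :=
      mul_le_mul_of_nonneg_right hexp2 (by positivity)
    exact lt_of_lt_of_le (poly_ineq hx) hprod
  have h6 : Real.exp 2 * a^3 ≤ b ^ (2*x) := by
    have hb2x : b ^ (2*x+2) = b ^ (2*x) * b^2 := by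
      rw [Real.rpow_add hb0, Real.rpow_two]
    rw [← mul_le_mul_iff_of_pos_right (show (0:ℝ) < b^2 by positivity), ← hb2x]
    calc Real.exp 2 * a^3 * b^2 = Real.exp 2 * a * (a*b)^2 := by ring
      _ = Real.exp 2 * a := by rw [hab]; ring
      _ ≤ b ^ (2*x+2) := hQ
  have hfin : E < b ^ (2*x) := by
    refine lt_of_lt_of_le ?_ h6
    have hpos : (0:ℝ) < (x+1)^2/(x+2)^4 := by positivity
    calc E = (7*x^2+21*x+16) * ((x+1)^2/(x+2)^4) := by rw [hE]; ring
      _ < (Real.exp 2 * ((x+1)*(x+2))) * ((x+1)^2/(x+2)^4) :=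
          mul_lt_mul_of_pos_right hkey hpos
      _ = Real.exp 2 * a^3 := by rw [ha]; field_simp
  -- conclude
  have hainv : a = b⁻¹ := by rw [ha, hb, inv_div]
  have hP : A = (b ^ (2*x))⁻¹ := by
    rw [hA, hainv, Real.inv_rpow hb0.le]
  have hb2x0 : 0 < b ^ (2*x) := Real.rpow_pos_of_pos hb0 _
  have hlt1 : A * E < 1 := by
    rw [hP, inv_mul_eq_div, div_lt_one hb2x0]
    exact hfin
  rw [hderiv]
  apply mul_pos (by positivity)
  linarith
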